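/- Let o₂ > 0 and K = K_{o₂}. Then: (a) for every y ∈ [0,1], |∂ₓK(1,y)| ≤ (o₂/2)·(1 + o₂/2)·e^{o₂(1 − y²)/4}; and (b) (∫₀¹ (∂ₓK(1,y))² dy)^{1/2} ≤ (o₂/2)·(1 + o₂/2)·e^{o₂/4}·(√(π/(2o₂))·erf(√(o₂/2)))^{1/2}. -/

import Mathlib

/-- The backstepping kernel `K_c`. -/
noncomputable def Kker (c x y : ℝ) : ℝ :=
  -(c / 2) * x * ∑' m : ℕ, (c * (x ^ 2 - y ^ 2) / 4) ^ m /
    ((Nat.factorial m : ℝ) * (Nat.factorial (m + 1) : ℝ))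

/-- The error function `erf(x) = (2/√π)·∫₀ˣ e^{−t²} dt`. -/
noncomputable def erf (x : ℝ) : ℝ :=
  (2 / Real.sqrt Real.pi) * ∫ t in (0:ℝ)..x, Real.exp (-(t ^ 2))

noncomputable def Pser (j : ℕ) (u : ℝ) : ℝ :=
  ∑' m : ℕ, u ^ m / ((Nat.factorial m : ℝ) * (Nat.factorial (m + j) : ℝ))

lemma denom_le (m j : ℕ) :
    (Nat.factorial m : ℝ) ≤ (Nat.factorial m : ℝ) * (Nat.factorial (m + j) : ℝ) :=
  le_mul_of_one_le_right (by positivity)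
    (by exact_mod_cast Nat.one_le_iff_ne_zero.mpr (Nat.factorial_ne_zero _))

lemma div_fact_le {a : ℝ} (ha : 0 ≤ a) (m j : ℕ) :
    a / ((Nat.factorial m : ℝ) * (Nat.factorial (m + j) : ℝ)) ≤ a / (Nat.factorial m : ℝ) :=
  div_le_div_of_nonneg_left ha (by positivity) (denom_le m j)

lemma summable_Pser (j : ℕ) (u : ℝ) :
    Summable (fun m : ℕ => u ^ m / ((Nat.factorial m : ℝ) * (Nat.factorial (m + j) : ℝ))) := by
  apply Summable.of_norm
  refine Summable.of_nonneg_of_le (fun m => norm_nonneg _) (fun m => ?_)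
    (Real.summable_pow_div_factorial |u|)
  rw [norm_div, norm_pow, Real.norm_eq_abs, Real.norm_eq_abs,
    abs_of_nonneg (by positivity : (0:ℝ) ≤ (Nat.factorial m : ℝ) * (Nat.factorial (m + j) : ℝ))]
  exact div_fact_le (by positivity) m j

lemma Pser_deriv_term_norm_le (j m : ℕ) {z R : ℝ} (hR : 0 ≤ R) (hz : |z| ≤ R) :
    ‖(m : ℝ) * z ^ (m - 1) / ((Nat.factorial m : ℝ) * (Nat.factorial (m + j) : ℝ))‖ ≤
      (m : ℝ) * R ^ (m - 1) / (Nat.factorial m : ℝ) := by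
  rw [Real.norm_eq_abs, abs_div, abs_mul, abs_pow, Nat.abs_cast,
    abs_of_nonneg (by positivity : (0:ℝ) ≤ (Nat.factorial m : ℝ) * (Nat.factorial (m + j) : ℝ))]
  calc (m : ℝ) * |z| ^ (m - 1) / ((Nat.factorial m : ℝ) * (Nat.factorial (m + j) : ℝ))
      ≤ (m : ℝ) * |z| ^ (m - 1) / (Nat.factorial m : ℝ) := div_fact_le (by positivity) m j
    _ ≤ (m : ℝ) * R ^ (m - 1) / (Nat.factorial m : ℝ) := by gcongr

lemma hasDerivAt_Pser (j : ℕ) (u : ℝ) : HasDerivAt (Pser j) (Pser (j + 1) u) u := by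
  set R : ℝ := |u| + 1 with hRdef
  have hR : (0:ℝ) < R := by positivity
  have hmem : u ∈ Metric.ball (0:ℝ) R := by
    simp only [Metric.mem_ball, Real.dist_eq, sub_zero, hRdef]; linarith [abs_nonneg u]
  have hbnd_summ : Summable (fun m : ℕ => (m : ℝ) * R ^ (m - 1) / (Nat.factorial m : ℝ)) := by
    rw [← summable_nat_add_iff 1]
    have : (fun n : ℕ => ((n + 1 : ℕ) : ℝ) * R ^ (n + 1 - 1) / (Nat.factorial (n + 1) : ℝ))
        = fun n : ℕ => R ^ n / (Nat.factorial n : ℝ) := by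
      funext n
      rw [Nat.add_sub_cancel, Nat.factorial_succ]
      have h1 : ((n:ℝ) + 1) ≠ 0 := by positivity
      have h2 : (Nat.factorial n : ℝ) ≠ 0 := by positivity
      push_cast
      field_simp
    rw [this]
    exact Real.summable_pow_div_factorial R
  have key : HasDerivAt (fun z : ℝ => ∑' m : ℕ,
      z ^ m / ((Nat.factorial m : ℝ) * (Nat.factorial (m + j) : ℝ)))
      (∑' m : ℕ, (m : ℝ) * u ^ (m - 1) / ((Nat.factorial m : ℝ) * (Nat.factorial (m + j) : ℝ)))
      u := by
    refine hasDerivAt_tsum_of_isPreconnected hbnd_summ Metric.isOpen_ball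
      (convex_ball (0:ℝ) R).isPreconnected
      (fun (m : ℕ) (z : ℝ) _ => (hasDerivAt_pow m z).div_const _)
      (fun m z hz => ?_) hmem (summable_Pser j u) hmem
    have hzR : |z| ≤ R := by
      simp only [Metric.mem_ball, Real.dist_eq, sub_zero] at hz; linarith
    exact Pser_deriv_term_norm_le j m (le_of_lt hR) hzR
  have hval : (∑' m : ℕ, (m : ℝ) * u ^ (m - 1) /
      ((Nat.factorial m : ℝ) * (Nat.factorial (m + j) : ℝ))) = Pser (j + 1) u := by
    have hs : Summable (fun m : ℕ => (m : ℝ) * u ^ (m - 1) /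
        ((Nat.factorial m : ℝ) * (Nat.factorial (m + j) : ℝ))) := by
      apply Summable.of_norm
      refine Summable.of_nonneg_of_le (fun m => norm_nonneg _) (fun m => ?_) hbnd_summ
      exact Pser_deriv_term_norm_le j m (le_of_lt hR)
        (by simp only [hRdef]; linarith [abs_nonneg u])
    rw [Summable.tsum_eq_zero_add hs]
    simp only [Nat.cast_zero, zero_mul, zero_div, zero_add]
    unfold Pser
    congr 1
    funext n
    have h1 : n + 1 + j = n + (j + 1) := by omega
    rw [h1, Nat.add_sub_cancel, Nat.factorial_succ n]
    push_cast
    field_simp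
  rw [← hval]
  exact key

lemma continuous_Pser (j : ℕ) : Continuous (Pser j) :=
  continuous_iff_continuousAt.mpr fun u => (hasDerivAt_Pser j u).continuousAt

lemma Pser_nonneg (j : ℕ) {u : ℝ} (hu : 0 ≤ u) : 0 ≤ Pser j u :=
  tsum_nonneg fun m => by positivity

lemma Pser_le_exp (j : ℕ) {u : ℝ} (hu : 0 ≤ u) : Pser j u ≤ Real.exp u := by
  have h1 : Real.exp u = ∑' n : ℕ, u ^ n / (Nat.factorial n : ℝ) := by
    rw [Real.exp_eq_exp_ℝ, NormedSpace.exp_eq_tsum_div]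
  rw [h1]
  refine Summable.tsum_le_tsum (fun m => ?_) (summable_Pser j u) (Real.summable_pow_div_factorial u)
  exact div_fact_le (by positivity) m j

lemma kker_hasDerivAt (c y : ℝ) :
    HasDerivAt (fun ξ => Kker c ξ y)
      (-(c / 2) * (Pser 1 (c * (1 - y ^ 2) / 4) + c / 2 * Pser 2 (c * (1 - y ^ 2) / 4))) 1 := by
  have hfun : (fun ξ => Kker c ξ y) = fun ξ => (-(c / 2) * ξ) * Pser 1 (c * (ξ ^ 2 - y ^ 2) / 4) := by
    funext ξ; simp only [Kker, Pser]
  rw [hfun]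
  have hq : HasDerivAt (fun ξ : ℝ => c * (ξ ^ 2 - y ^ 2) / 4) (c / 2) 1 := by
    have := (((hasDerivAt_pow 2 (1:ℝ)).sub_const (y ^ 2)).const_mul c).div_const 4
    refine this.congr_deriv ?_
    push_cast
    ring
  have hP : HasDerivAt (fun ξ : ℝ => Pser 1 (c * (ξ ^ 2 - y ^ 2) / 4))
      (Pser 2 (c * (1 - y ^ 2) / 4) * (c / 2)) 1 := by
    have := (hasDerivAt_Pser 1 (c * ((1:ℝ) ^ 2 - y ^ 2) / 4)).comp 1 hq
    simp only [one_pow] at this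
    exact this
  have hx : HasDerivAt (fun ξ : ℝ => -(c / 2) * ξ) (-(c / 2)) 1 := by
    simpa using (hasDerivAt_id (1:ℝ)).const_mul (-(c/2))
  have := hx.mul hP
  simp only [one_pow] at this
  refine this.congr_deriv ?_
  ring

lemma kker_deriv_eq (c y : ℝ) :
    deriv (fun ξ => Kker c ξ y) 1 =
      -(c / 2) * (Pser 1 (c * (1 - y ^ 2) / 4) + c / 2 * Pser 2 (c * (1 - y ^ 2) / 4)) :=
  (kker_hasDerivAt c y).deriv

/-- bounds on the `x`-derivative of the backstepping kernel along
the boundary `x = 1`: a pointwise bound and the resulting L² bound. -/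
theorem kernel_x_derivative_bounds (o₂ : ℝ) (ho₂ : o₂ > 0) :
    (∀ y ∈ Set.Icc (0:ℝ) 1,
      |deriv (fun ξ => Kker o₂ ξ y) 1| ≤
        (o₂ / 2) * (1 + o₂ / 2) * Real.exp (o₂ * (1 - y ^ 2) / 4)) ∧
    Real.sqrt (∫ y in (0:ℝ)..1, (deriv (fun ξ => Kker o₂ ξ y) 1) ^ 2) ≤
      (o₂ / 2) * (1 + o₂ / 2) * Real.exp (o₂ / 4) *
        Real.sqrt (Real.sqrt (Real.pi / (2 * o₂)) * erf (Real.sqrt (o₂ / 2))) := by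
  have hpt : ∀ y ∈ Set.Icc (0:ℝ) 1,
      |deriv (fun ξ => Kker o₂ ξ y) 1| ≤
        (o₂ / 2) * (1 + o₂ / 2) * Real.exp (o₂ * (1 - y ^ 2) / 4) := by
    intro y hy
    obtain ⟨hy0, hy1⟩ := hy
    have hu : (0:ℝ) ≤ o₂ * (1 - y ^ 2) / 4 :=
      div_nonneg (mul_nonneg ho₂.le (by nlinarith)) (by norm_num)
    set u := o₂ * (1 - y ^ 2) / 4 with hudef
    rw [kker_deriv_eq]
    have h1 := Pser_le_exp 1 hu
    have h2 := Pser_le_exp 2 hu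
    have hp1 := Pser_nonneg 1 hu
    have hp2 := Pser_nonneg 2 hu
    have habs : |-(o₂ / 2) * (Pser 1 u + o₂ / 2 * Pser 2 u)|
        = (o₂ / 2) * (Pser 1 u + o₂ / 2 * Pser 2 u) := by
      rw [abs_mul, abs_neg, abs_of_pos (by linarith : (0:ℝ) < o₂ / 2),
        abs_of_nonneg (add_nonneg hp1 (mul_nonneg (by linarith) hp2))]
    rw [habs]
    nlinarith [mul_le_mul_of_nonneg_left h1 (by linarith : (0:ℝ) ≤ o₂ / 2),
      mul_le_mul_of_nonneg_left h2 (by positivity : (0:ℝ) ≤ o₂ / 2 * (o₂ / 2))]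
  refine ⟨hpt, ?_⟩
  have hDfun : (fun y : ℝ => deriv (fun ξ => Kker o₂ ξ y) 1)
      = fun y => -(o₂ / 2) * (Pser 1 (o₂ * (1 - y ^ 2) / 4)
        + o₂ / 2 * Pser 2 (o₂ * (1 - y ^ 2) / 4)) :=
    funext fun y => kker_deriv_eq o₂ y
  have hcontu : Continuous (fun y : ℝ => o₂ * (1 - y ^ 2) / 4) := by continuity
  have hcontD : Continuous (fun y : ℝ => deriv (fun ξ => Kker o₂ ξ y) 1) := by
    rw [hDfun]
    exact continuous_const.mul (((continuous_Pser 1).comp hcontu).add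
      (continuous_const.mul ((continuous_Pser 2).comp hcontu)))
  have hcontB : Continuous (fun y : ℝ =>
      ((o₂ / 2) * (1 + o₂ / 2) * Real.exp (o₂ * (1 - y ^ 2) / 4)) ^ 2) := by continuity
  have hmono : (∫ y in (0:ℝ)..1, (deriv (fun ξ => Kker o₂ ξ y) 1) ^ 2)
      ≤ ∫ y in (0:ℝ)..1, ((o₂ / 2) * (1 + o₂ / 2) * Real.exp (o₂ * (1 - y ^ 2) / 4)) ^ 2 := by
    apply intervalIntegral.integral_mono_on (by norm_num)
      ((hcontD.pow 2).intervalIntegrable 0 1) (hcontB.intervalIntegrable 0 1)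
    intro y hy
    calc (deriv (fun ξ => Kker o₂ ξ y) 1) ^ 2
        = |deriv (fun ξ => Kker o₂ ξ y) 1| ^ 2 := (sq_abs _).symm
      _ ≤ ((o₂ / 2) * (1 + o₂ / 2) * Real.exp (o₂ * (1 - y ^ 2) / 4)) ^ 2 :=
          pow_le_pow_left₀ (abs_nonneg _) (hpt y hy) 2
  have hInt2 : (∫ y in (0:ℝ)..1, ((o₂ / 2) * (1 + o₂ / 2) * Real.exp (o₂ * (1 - y ^ 2) / 4)) ^ 2)
      = ((o₂ / 2) * (1 + o₂ / 2)) ^ 2 * Real.exp (o₂ / 2)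
        * ∫ y in (0:ℝ)..1, Real.exp (-(o₂ / 2) * y ^ 2) := by
    rw [← intervalIntegral.integral_const_mul]
    apply intervalIntegral.integral_congr
    intro y _
    have he : Real.exp (o₂ * (1 - y ^ 2) / 4) ^ 2
        = Real.exp (o₂ / 2) * Real.exp (-(o₂ / 2) * y ^ 2) := by
      rw [sq, ← Real.exp_add, ← Real.exp_add]; congr 1; ring
    simp only [mul_pow, he]; ring
  have hapos : 0 < Real.sqrt (o₂ / 2) := Real.sqrt_pos.mpr (by linarith)
  have ha2 : Real.sqrt (o₂ / 2) ^ 2 = o₂ / 2 := Real.sq_sqrt (by linarith)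
  have hsub : (∫ t in (0:ℝ)..(Real.sqrt (o₂ / 2)), Real.exp (-(t ^ 2)))
      = Real.sqrt (o₂ / 2) * ∫ y in (0:ℝ)..1, Real.exp (-(o₂ / 2) * y ^ 2) := by
    have h := intervalIntegral.integral_comp_mul_left (a := (0:ℝ)) (b := 1)
      (fun t => Real.exp (-(t ^ 2))) (ne_of_gt hapos)
    have h' : (fun y : ℝ => Real.exp (-((Real.sqrt (o₂ / 2) * y) ^ 2)))
        = fun y : ℝ => Real.exp (-(o₂ / 2) * y ^ 2) := by
      funext y; congr 1; rw [mul_pow, ha2]; ring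
    simp only [h', mul_zero, mul_one, smul_eq_mul] at h
    rw [h]
    field_simp
  have hkey : Real.sqrt (Real.pi / (2 * o₂)) * erf (Real.sqrt (o₂ / 2))
      = ∫ y in (0:ℝ)..1, Real.exp (-(o₂ / 2) * y ^ 2) := by
    unfold erf
    rw [hsub]
    have hs1 : Real.sqrt (Real.pi / (2 * o₂)) * Real.sqrt (o₂ / 2) = Real.sqrt Real.pi / 2 := by
      rw [← Real.sqrt_mul (by positivity),
        show Real.pi / (2 * o₂) * (o₂ / 2) = Real.pi / 4 by field_simp; ring,
        show (4:ℝ) = 2 ^ 2 by norm_num, Real.sqrt_div Real.pi_pos.le,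
        Real.sqrt_sq (by norm_num : (0:ℝ) ≤ 2)]
    have hπ : Real.sqrt Real.pi ≠ 0 := ne_of_gt (Real.sqrt_pos.mpr Real.pi_pos)
    rw [show Real.sqrt (Real.pi / (2 * o₂)) * (2 / Real.sqrt Real.pi
        * (Real.sqrt (o₂ / 2) * ∫ y in (0:ℝ)..1, Real.exp (-(o₂ / 2) * y ^ 2)))
      = (Real.sqrt (Real.pi / (2 * o₂)) * Real.sqrt (o₂ / 2)) * (2 / Real.sqrt Real.pi)
        * ∫ y in (0:ℝ)..1, Real.exp (-(o₂ / 2) * y ^ 2) by ring, hs1]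
    field_simp
  calc Real.sqrt (∫ y in (0:ℝ)..1, (deriv (fun ξ => Kker o₂ ξ y) 1) ^ 2)
      ≤ Real.sqrt (((o₂ / 2) * (1 + o₂ / 2)) ^ 2 * Real.exp (o₂ / 2)
          * ∫ y in (0:ℝ)..1, Real.exp (-(o₂ / 2) * y ^ 2)) :=
        Real.sqrt_le_sqrt (hmono.trans_eq hInt2)
    _ = (o₂ / 2) * (1 + o₂ / 2) * Real.exp (o₂ / 4)
        * Real.sqrt (∫ y in (0:ℝ)..1, Real.exp (-(o₂ / 2) * y ^ 2)) := by
        rw [show ((o₂ / 2) * (1 + o₂ / 2)) ^ 2 * Real.exp (o₂ / 2)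
              * ∫ y in (0:ℝ)..1, Real.exp (-(o₂ / 2) * y ^ 2)
            = ((o₂ / 2) * (1 + o₂ / 2) * Real.exp (o₂ / 4)) ^ 2
              * ∫ y in (0:ℝ)..1, Real.exp (-(o₂ / 2) * y ^ 2) by
          rw [mul_pow, mul_pow, sq (Real.exp (o₂ / 4)), ← Real.exp_add,
            show o₂ / 4 + o₂ / 4 = o₂ / 2 by ring]; ring,
          Real.sqrt_mul (sq_nonneg _), Real.sqrt_sq (by positivity)]
    _ = (o₂ / 2) * (1 + o₂ / 2) * Real.exp (o₂ / 4)
        * Real.sqrt (Real.sqrt (Real.pi / (2 * o₂)) * erf (Real.sqrt (o₂ / 2))) := by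
        rw [hkey]
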